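/- Let a and b be real quaternions satisfying a² = −1 and b² = −1 (so a and b are purely imaginary unit quaternions, corresponding to rotations of ℝ³ by angle π). Then the commutator a·b·a⁻¹·b⁻¹ has zero real part if and only if (re(a·b))² = 1/2; equivalently, the commutator of the two corresponding rotations has order 2 in SO(3) exactly when the axes of the rotations make an angle of π/4 or 3π/4. -/

import Mathlib

/-- For purely imaginary unit quaternions `a`, `b` (i.e. `a² = −1`, `b² = −1`,
corresponding to rotations of `ℝ³` by `π`), the commutator `a·b·a⁻¹·b⁻¹` has zero
real part (i.e. the commutator of the two rotations has order 2 in `SO(3)`) if and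
only if `(re (a·b))² = 1/2`, i.e. exactly when the axes of the two rotations make an
angle of `π/4` or `3π/4`. -/
theorem stmt10 (a b : Quaternion ℝ) (ha : a ^ 2 = -1) (hb : b ^ 2 = -1) :
    (a * b * a⁻¹ * b⁻¹).re = 0 ↔ ((a * b).re) ^ 2 = 1 / 2 := by
  have hainv : a⁻¹ = -a := by
    refine inv_eq_of_mul_eq_one_right ?_
    rw [mul_neg, ← sq, ha, neg_neg]
  have hbinv : b⁻¹ = -b := by
    refine inv_eq_of_mul_eq_one_right ?_
    rw [mul_neg, ← sq, hb, neg_neg]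
  have ha' : a * a = -1 := by rw [← sq, ha]
  have hb' : b * b = -1 := by rw [← sq, hb]
  have h1 := congrArg QuaternionAlgebra.re ha'
  have h2 := congrArg QuaternionAlgebra.imI ha'
  have h3 := congrArg QuaternionAlgebra.imJ ha'
  have h4 := congrArg QuaternionAlgebra.imK ha'
  have g1 := congrArg QuaternionAlgebra.re hb'
  have g2 := congrArg QuaternionAlgebra.imI hb'
  have g3 := congrArg QuaternionAlgebra.imJ hb'
  have g4 := congrArg QuaternionAlgebra.imK hb'
  simp only [Quaternion.re_mul, Quaternion.imI_mul, Quaternion.imJ_mul,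
    Quaternion.imK_mul, Quaternion.re_neg, Quaternion.imI_neg, Quaternion.imJ_neg,
    Quaternion.imK_neg, Quaternion.re_one, Quaternion.imI_one, Quaternion.imJ_one,
    Quaternion.imK_one] at h1 h2 h3 h4 g1 g2 g3 g4
  have hare : a.re = 0 := by
    have hsq : a.re ^ 2 = 0 := by nlinarith [h1, h2, h3, h4]
    exact pow_eq_zero_iff (by norm_num) |>.mp hsq
  have hbre : b.re = 0 := by
    have hsq : b.re ^ 2 = 0 := by nlinarith [g1, g2, g3, g4]
    exact pow_eq_zero_iff (by norm_num) |>.mp hsq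
  have key : (a * b * a⁻¹ * b⁻¹).re = 2 * ((a * b).re) ^ 2 - 1 := by
    rw [hainv, hbinv]
    simp only [Quaternion.re_mul, Quaternion.imI_mul, Quaternion.imJ_mul,
      Quaternion.imK_mul, Quaternion.re_neg, Quaternion.imI_neg, Quaternion.imJ_neg,
      Quaternion.imK_neg]
    simp only [hare, hbre] at h1 g1 ⊢
    linear_combination (b.imI * b.imI + b.imJ * b.imJ + b.imK * b.imK) * h1 + g1
  rw [key]
  constructor <;> intro h <;> linarith
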